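/- Let M be a Garside monoid, let N and K be parabolic submonoids of M, and let g1, g2 ∈ G(M) with g2 ∈ G(K). If g1 ≤_N g2, then g1 ∈ G(K). In particular, the ≤_N-minimal representative m_N(g2) of the coset g2 G(N) lies in G(K). -/

import Mathlib

namespace PG

variable {M : Type*} [Monoid M]

/-- `LDvd a b` : `a` left-divides `b`. -/
def LDvd (a b : M) : Prop := ∃ c, b = a * c

/-- `RDvd a b` : `a` right-divides `b`. -/
def RDvd (a b : M) : Prop := ∃ c, b = c * a

/-- A monoid is cancellative if `c * a * d = c * b * d` implies `a = b`. -/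
def IsCancellative (M : Type*) [Monoid M] : Prop :=
  ∀ a b c d : M, c * a * d = c * b * d → a = b

/-- A monoid is atomic if it admits a norm `ν : M → ℕ` with `ν a > 0` for `a ≠ 1`
and `ν (a * b) ≥ ν a + ν b`. -/
def IsAtomicMon (M : Type*) [Monoid M] : Prop :=
  ∃ ν : M → ℕ, (∀ a : M, a ≠ 1 → 0 < ν a) ∧ ∀ a b : M, ν a + ν b ≤ ν (a * b)

/-- `m` is the least common multiple of `a` and `b` for left-divisibility. -/
def IsLcmL (a b m : M) : Prop :=
  LDvd a m ∧ LDvd b m ∧ ∀ c : M, LDvd a c → LDvd b c → LDvd m c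

/-- `m` is the least common multiple of `a` and `b` for right-divisibility. -/
def IsLcmR (a b m : M) : Prop :=
  RDvd a m ∧ RDvd b m ∧ ∀ c : M, RDvd a c → RDvd b c → RDvd m c

/-- `d` is the greatest common left-divisor of `a` and `b`. -/
def IsGcdL (a b d : M) : Prop :=
  LDvd d a ∧ LDvd d b ∧ ∀ c : M, LDvd c a → LDvd c b → LDvd c d

/-- `d` is the greatest common right-divisor of `a` and `b`. -/
def IsGcdR (a b d : M) : Prop :=
  RDvd d a ∧ RDvd d b ∧ ∀ c : M, RDvd c a → RDvd c b → RDvd c d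

/-- A preGarside monoid: cancellative, atomic, and any two elements admitting a
common multiple (on the appropriate side) admit a least one. -/
def IsPreGarside (M : Type*) [Monoid M] : Prop :=
  IsCancellative M ∧ IsAtomicMon M ∧
    (∀ a b : M, (∃ c, LDvd a c ∧ LDvd b c) → ∃ m, IsLcmL a b m) ∧
    (∀ a b : M, (∃ c, RDvd a c ∧ RDvd b c) → ∃ m, IsLcmR a b m)

/-- A submonoid is special if it is closed under factors. -/
def IsSpecial (N : Submonoid M) : Prop := ∀ a b : M, a * b ∈ N → a ∈ N ∧ b ∈ N

/-- A (standard) parabolic submonoid: special and closed under all existing lcms. -/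
def IsParabolic (N : Submonoid M) : Prop :=
  IsSpecial N ∧ (∀ a b m : M, a ∈ N → b ∈ N → IsLcmL a b m → m ∈ N) ∧
    ∀ a b m : M, a ∈ N → b ∈ N → IsLcmR a b m → m ∈ N

/-- `b` is a factor of `a`. -/
def Factor (b a : M) : Prop := ∃ c d : M, a = c * b * d

/-- The set of factors of `a`. -/
def Factors (a : M) : Set M := {b | Factor b a}

/-- An element is balanced when its left-divisors and right-divisors coincide. -/
def IsBalanced (a : M) : Prop := {b : M | LDvd b a} = {b : M | RDvd b a}

/-- A Garside element: balanced, and its factors generate the monoid. -/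
def IsGarsideElt (Δ : M) : Prop := IsBalanced Δ ∧ Submonoid.closure (Factors Δ) = ⊤

/-- A Garside monoid: a preGarside monoid possessing a Garside element. -/
def IsGarside (M : Type*) [Monoid M] : Prop := IsPreGarside M ∧ ∃ Δ : M, IsGarsideElt Δ

/-- The factors of `a` computed inside the submonoid `N`. -/
def FactorsIn (N : Submonoid M) (a : M) : Set M :=
  {b | b ∈ N ∧ ∃ c ∈ N, ∃ d ∈ N, a = c * b * d}

/-- `Δ` is a Garside element of the submonoid `N`: it is balanced in `N` and its
factors in `N` generate `N`. -/
def IsGarsideEltIn (N : Submonoid M) (Δ : M) : Prop :=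
  Δ ∈ N ∧ ({b : M | b ∈ N ∧ ∃ c ∈ N, Δ = b * c} = {b : M | b ∈ N ∧ ∃ c ∈ N, Δ = c * b}) ∧
    Submonoid.closure (FactorsIn N Δ) = N

/-- The right coset `g * N` (an `R_N`-class). -/
def RCoset (N : Submonoid M) (g : M) : Set M := {x | ∃ h ∈ N, x = g * h}

/-- The left coset `N * g` (an `L_N`-class). -/
def LCoset (N : Submonoid M) (g : M) : Set M := {x | ∃ h ∈ N, x = h * g}

/-- `RReduces N B A` : the `R_N`-class `B` reduces in one step to the `R_N`-class `A`,
i.e. `A = g₁ N`, `B = g₂ N` with `g₂ ∈ g₁ N` and `g₁ ∉ g₂ N`. -/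
def RReduces (N : Submonoid M) (B A : Set M) : Prop :=
  ∃ g₁ g₂ : M, A = RCoset N g₁ ∧ B = RCoset N g₂ ∧ g₂ ∈ RCoset N g₁ ∧ g₁ ∉ RCoset N g₂

/-- `LReduces N B A` : the `L_N`-class `B` reduces in one step to the `L_N`-class `A`. -/
def LReduces (N : Submonoid M) (B A : Set M) : Prop :=
  ∃ g₁ g₂ : M, A = LCoset N g₁ ∧ B = LCoset N g₂ ∧ g₂ ∈ LCoset N g₁ ∧ g₁ ∉ LCoset N g₂

/-- `N` has the `R` confluence property: the reduction rule on `R_N`-classes is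
Noetherian and locally confluent. -/
def RConfluence (N : Submonoid M) : Prop :=
  (¬ ∃ f : ℕ → Set M, ∀ n : ℕ, RReduces N (f n) (f (n + 1))) ∧
    ∀ C A B : Set M, RReduces N C A → RReduces N C B →
      ∃ D : Set M, Relation.ReflTransGen (RReduces N) A D ∧
        Relation.ReflTransGen (RReduces N) B D

/-- `N` has the `L` confluence property. -/
def LConfluence (N : Submonoid M) : Prop :=
  (¬ ∃ f : ℕ → Set M, ∀ n : ℕ, LReduces N (f n) (f (n + 1))) ∧
    ∀ C A B : Set M, LReduces N C A → LReduces N C B →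
      ∃ D : Set M, Relation.ReflTransGen (LReduces N) A D ∧
        Relation.ReflTransGen (LReduces N) B D

/-- `N` has the confluence property. -/
def Confluence (N : Submonoid M) : Prop := RConfluence N ∧ LConfluence N

/-- The `R_N`-class `C` is minimal: whenever `g` represents `C` and `g = g' * h` with
`h ∈ N`, one has `g' N = C`. -/
def IsMinimalRCoset (N : Submonoid M) (C : Set M) : Prop :=
  (∃ g : M, C = RCoset N g) ∧
    ∀ g g' h : M, h ∈ N → C = RCoset N g → g = g' * h → RCoset N g' = C

/-- The `L_N`-class `C` is minimal. -/
def IsMinimalLCoset (N : Submonoid M) (C : Set M) : Prop :=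
  (∃ g : M, C = LCoset N g) ∧
    ∀ g g' h : M, h ∈ N → C = LCoset N g → g = h * g' → LCoset N g' = C

/-- The set of atoms of `M`. -/
def AtomSet (M : Type*) [Monoid M] : Set M :=
  {a | a ≠ 1 ∧ ∀ b c : M, a = b * c → b = 1 ∨ c = 1}

/-- `|x|` : the least number of factors of `Δ` needed to write `x` as a product. -/
noncomputable def lenFactors (Δ x : M) : ℕ :=
  sInf {k | ∃ l : List M, l.length = k ∧ (∀ y ∈ l, y ∈ Factors Δ) ∧ l.prod = x}

section Amalgam

variable {M₁ M₂ N : Type*} [Monoid M₁] [Monoid M₂] [Monoid N]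

/-- The congruence on the free product `M₁ ∗ M₂` identifying `ι₁ h` with `ι₂ h`
for every `h ∈ N`. -/
def amalgamCon (ι₁ : N →* M₁) (ι₂ : N →* M₂) : Con (Monoid.Coprod M₁ M₂) :=
  conGen fun a b => ∃ h : N, a = Monoid.Coprod.inl (ι₁ h) ∧ b = Monoid.Coprod.inr (ι₂ h)

/-- The amalgamated product `M₁ *_N M₂` : the pushout of `ι₁ : N →* M₁` and
`ι₂ : N →* M₂` in the category of monoids. -/
def Amalgam (ι₁ : N →* M₁) (ι₂ : N →* M₂) : Type _ := (amalgamCon ι₁ ι₂).Quotient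

instance (ι₁ : N →* M₁) (ι₂ : N →* M₂) : Monoid (Amalgam ι₁ ι₂) :=
  inferInstanceAs (Monoid (amalgamCon ι₁ ι₂).Quotient)

/-- The canonical morphism `M₁ →* M₁ *_N M₂`. -/
def amalgamInl (ι₁ : N →* M₁) (ι₂ : N →* M₂) : M₁ →* Amalgam ι₁ ι₂ :=
  (amalgamCon ι₁ ι₂).mk'.comp Monoid.Coprod.inl

/-- The canonical morphism `M₂ →* M₁ *_N M₂`. -/
def amalgamInr (ι₁ : N →* M₁) (ι₂ : N →* M₂) : M₂ →* Amalgam ι₁ ι₂ :=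
  (amalgamCon ι₁ ι₂).mk'.comp Monoid.Coprod.inr

end Amalgam

section Groups

/-- `G`, together with `κ : M →* G`, is the enveloping group `G(M)` of the monoid `M`:
every monoid morphism from `M` to a group factors uniquely through `κ`. -/
def IsEnvelopingGroup (M : Type) [Monoid M] (G : Type) [Group G] (κ : M →* G) : Prop :=
  ∀ (H : Type) [Group H], ∀ f : M →* H, ∃! φ : G →* H, φ.comp κ = f

variable {G : Type*} [Group G]

/-- `(a, b)` is the (right) normal form of `g ∈ G(M)` : `g = a b⁻¹` with `a ∧_R b = 1`. -/
def NormalForm (κ : M →* G) (g : G) (a b : M) : Prop :=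
  g = κ a * (κ b)⁻¹ ∧ ∀ c : M, RDvd c a → RDvd c b → c = 1

/-- The relation `≤_N` on `G(M)` : for `g₁ = a₁ b₁⁻¹` and `g₂ = a₂ b₂⁻¹` in normal form,
`g₁ ≤_N g₂` iff there are `h₁, h₂ ∈ N` and `a ∈ M` with `a₂ = a₁ a`,
`h₂ b₂ = h₁ b₁ a` and `h₂ ∧_L h₁ = h₂ ∧_L (h₁ b₁)`. -/
def leN (κ : M →* G) (N : Submonoid M) (g₁ g₂ : G) : Prop :=
  ∃ a₁ b₁ a₂ b₂ : M, NormalForm κ g₁ a₁ b₁ ∧ NormalForm κ g₂ a₂ b₂ ∧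
    ∃ h₁ ∈ N, ∃ h₂ ∈ N, ∃ a : M, a₂ = a₁ * a ∧ h₂ * b₂ = h₁ * b₁ * a ∧
      ∃ d : M, IsGcdL h₂ h₁ d ∧ IsGcdL h₂ (h₁ * b₁) d

/-- `|g|` for `g ∈ G(M)` : the least number of factors of `Δ` and inverses of such
needed to write `g` as a product. -/
noncomputable def lenSimple (κ : M →* G) (Δ : M) (g : G) : ℕ :=
  sInf {k | ∃ l : List G, l.length = k ∧
    (∀ x ∈ l, ∃ d ∈ Factors Δ, x = κ d ∨ x = (κ d)⁻¹) ∧ l.prod = g}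

/-- `PhiSpec κ Δ ΔN g h m` : `m = φ_g(h)`, where, for `g` with normal form `a b⁻¹`,
`φ_g(h) = a (a ∧_R (h b))⁻¹ (M_N(h b (a ∧_R (h b))⁻¹))⁻¹` and
`M_N(x) = (x ∧_L Δ_N^{|x|})⁻¹ x`. -/
def PhiSpec (κ : M →* G) (Δ ΔN : M) (g : G) (h : M) (m : G) : Prop :=
  ∃ a b c y d z : M,
    NormalForm κ g a b ∧ IsGcdR a (h * b) c ∧ h * b = y * c ∧
    IsGcdL y (ΔN ^ lenFactors Δ y) d ∧ y = d * z ∧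
    m = κ a * (κ c)⁻¹ * (κ z)⁻¹

/-- The restriction of `κ : M →* G` to a submonoid `N`, seen as a morphism onto the
subgroup of `G` generated by the image of `N`. -/
def restrictHom (κ : M →* G) (N : Submonoid M) :
    ↥N →* ↥(Subgroup.closure (κ '' (N : Set M))) :=
  MonoidHom.codRestrict (κ.comp N.subtype) (Subgroup.closure (κ '' (N : Set M)))
    fun x => Subgroup.subset_closure ⟨(x : M), x.2, rfl⟩

end Groups

/-- The family of preGarside monoids of FC type: the smallest family of monoids
containing the Garside monoids and closed under amalgamated products over a common
parabolic submonoid (and under isomorphism). -/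
inductive IsFCType : (M : Type) → [_inst : Monoid M] → Prop where
  | garside : ∀ (M : Type) [Monoid M], IsGarside M → IsFCType M
  | amalgam : ∀ (M₁ M₂ N : Type) [Monoid M₁] [Monoid M₂] [Monoid N]
      (ι₁ : N →* M₁) (ι₂ : N →* M₂),
      Function.Injective ι₁ → Function.Injective ι₂ →
      IsParabolic (MonoidHom.mrange ι₁) → IsParabolic (MonoidHom.mrange ι₂) →
      IsFCType M₁ → IsFCType M₂ → IsFCType (Amalgam ι₁ ι₂)
  | congr : ∀ (M : Type) [Monoid M] (M' : Type) [Monoid M'],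
      (M ≃* M') → IsFCType M → IsFCType M'

/-! ### Auxiliary development for Proposition 4.5 -/

section Basics

variable {A : Type} [Monoid A]

theorem lcancel (hc : IsCancellative A) {c a b : A} (h : c * a = c * b) : a = b := by
  apply hc a b c 1; simp [h]

theorem rcancel (hc : IsCancellative A) {d a b : A} (h : a * d = b * d) : a = b := by
  apply hc a b 1 d; simp [h]

theorem nu_one (ν : A → ℕ) (hν2 : ∀ a b : A, ν a + ν b ≤ ν (a * b)) : ν 1 = 0 := by
  have := hν2 1 1; simp at this; omega

theorem eq_one_of_nu (ν : A → ℕ) (hν1 : ∀ a : A, a ≠ 1 → 0 < ν a) {a : A}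
    (h : ν a = 0) : a = 1 := by
  by_contra hne; have := hν1 a hne; omega

theorem mul_eq_one_iff (ν : A → ℕ) (hν1 : ∀ a : A, a ≠ 1 → 0 < ν a)
    (hν2 : ∀ a b : A, ν a + ν b ≤ ν (a * b)) {a b : A} (h : a * b = 1) :
    a = 1 ∧ b = 1 := by
  have h1 : ν 1 = 0 := nu_one ν hν2
  have := hν2 a b
  rw [h, h1] at this
  exact ⟨eq_one_of_nu ν hν1 (by omega), eq_one_of_nu ν hν1 (by omega)⟩

theorem ldvd_refl (a : A) : LDvd a a := ⟨1, (mul_one a).symm⟩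

theorem ldvd_one (a : A) : LDvd a (a * 1) := ⟨1, rfl⟩

theorem ldvd_mul (a b : A) : LDvd a (a * b) := ⟨b, rfl⟩

theorem rdvd_mul (a b : A) : RDvd b (a * b) := ⟨a, rfl⟩

theorem rdvd_refl (a : A) : RDvd a a := ⟨1, (one_mul a).symm⟩

theorem one_ldvd (a : A) : LDvd 1 a := ⟨a, (one_mul a).symm⟩

theorem one_rdvd (a : A) : RDvd 1 a := ⟨a, (mul_one a).symm⟩

theorem ldvd_trans {a b c : A} (h1 : LDvd a b) (h2 : LDvd b c) : LDvd a c := by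
  obtain ⟨u, rfl⟩ := h1; obtain ⟨v, rfl⟩ := h2; exact ⟨u * v, mul_assoc _ _ _⟩

theorem rdvd_trans {a b c : A} (h1 : RDvd a b) (h2 : RDvd b c) : RDvd a c := by
  obtain ⟨u, rfl⟩ := h1; obtain ⟨v, rfl⟩ := h2; exact ⟨v * u, (mul_assoc _ _ _).symm⟩

theorem ldvd_antisymm (hc : IsCancellative A) (ν : A → ℕ)
    (hν1 : ∀ a : A, a ≠ 1 → 0 < ν a) (hν2 : ∀ a b : A, ν a + ν b ≤ ν (a * b))
    {a b : A} (h1 : LDvd a b) (h2 : LDvd b a) : a = b := by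
  obtain ⟨u, rfl⟩ := h1
  obtain ⟨v, hv⟩ := h2
  have : a * 1 = a * (u * v) := by rw [mul_one, ← mul_assoc]; exact hv
  have huv : (1 : A) = u * v := lcancel hc this
  have := mul_eq_one_iff ν hν1 hν2 huv.symm
  rw [this.1, mul_one]

theorem rdvd_antisymm (hc : IsCancellative A) (ν : A → ℕ)
    (hν1 : ∀ a : A, a ≠ 1 → 0 < ν a) (hν2 : ∀ a b : A, ν a + ν b ≤ ν (a * b))
    {a b : A} (h1 : RDvd a b) (h2 : RDvd b a) : a = b := by
  obtain ⟨u, rfl⟩ := h1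
  obtain ⟨v, hv⟩ := h2
  have : 1 * a = (v * u) * a := by rw [one_mul, mul_assoc]; exact hv
  have huv : (1 : A) = v * u := rcancel hc this
  have := mul_eq_one_iff ν hν1 hν2 huv.symm
  rw [this.2, one_mul]

theorem nu_ldvd_le (ν : A → ℕ) (hν2 : ∀ a b : A, ν a + ν b ≤ ν (a * b)) {c a : A}
    (h : LDvd c a) : ν c ≤ ν a := by
  obtain ⟨u, rfl⟩ := h; have := hν2 c u; omega

theorem nu_rdvd_le (ν : A → ℕ) (hν2 : ∀ a b : A, ν a + ν b ≤ ν (a * b)) {c a : A}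
    (h : RDvd c a) : ν c ≤ ν a := by
  obtain ⟨u, rfl⟩ := h; have := hν2 u c; omega

/-- Existence of left gcds. -/
theorem gcdL_exists (hc : IsCancellative A) (ν : A → ℕ)
    (hν1 : ∀ a : A, a ≠ 1 → 0 < ν a) (hν2 : ∀ a b : A, ν a + ν b ≤ ν (a * b))
    (hlcmL : ∀ a b : A, (∃ c, LDvd a c ∧ LDvd b c) → ∃ m, IsLcmL a b m)
    (a b : A) : ∃ d, IsGcdL a b d := by
  classical
  set P : ℕ → Prop := fun n => ∃ c : A, LDvd c a ∧ LDvd c b ∧ ν c = n with hP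
  have hP0 : P 0 := ⟨1, one_ldvd a, one_ldvd b, nu_one ν hν2⟩
  set k := Nat.findGreatest P (ν a) with hk
  have hPk : P k := Nat.findGreatest_spec (Nat.zero_le _) hP0
  obtain ⟨d, hda, hdb, hdν⟩ := hPk
  refine ⟨d, hda, hdb, fun c hca hcb => ?_⟩
  obtain ⟨m, hm⟩ := hlcmL d c ⟨a, hda, hca⟩
  have hma : LDvd m a := hm.2.2 a hda hca
  have hmb : LDvd m b := hm.2.2 b hdb hcb
  have hmk : ν m ≤ k := by
    refine Nat.le_findGreatest (nu_ldvd_le ν hν2 hma) ⟨m, hma, hmb, rfl⟩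
  obtain ⟨z, hz⟩ := hm.1
  have : ν d + ν z ≤ ν m := hz ▸ hν2 d z
  have hz0 : ν z = 0 := by omega
  have : z = 1 := eq_one_of_nu ν hν1 hz0
  rw [this, mul_one] at hz
  exact hz ▸ hm.2.1

/-- Existence of right gcds. -/
theorem gcdR_exists (hc : IsCancellative A) (ν : A → ℕ)
    (hν1 : ∀ a : A, a ≠ 1 → 0 < ν a) (hν2 : ∀ a b : A, ν a + ν b ≤ ν (a * b))
    (hlcmR : ∀ a b : A, (∃ c, RDvd a c ∧ RDvd b c) → ∃ m, IsLcmR a b m)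
    (a b : A) : ∃ d, IsGcdR a b d := by
  classical
  set P : ℕ → Prop := fun n => ∃ c : A, RDvd c a ∧ RDvd c b ∧ ν c = n with hP
  have hP0 : P 0 := ⟨1, one_rdvd a, one_rdvd b, nu_one ν hν2⟩
  set k := Nat.findGreatest P (ν a) with hk
  have hPk : P k := Nat.findGreatest_spec (Nat.zero_le _) hP0
  obtain ⟨d, hda, hdb, hdν⟩ := hPk
  refine ⟨d, hda, hdb, fun c hca hcb => ?_⟩
  obtain ⟨m, hm⟩ := hlcmR d c ⟨a, hda, hca⟩
  have hma : RDvd m a := hm.2.2 a hda hca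
  have hmb : RDvd m b := hm.2.2 b hdb hcb
  have hmk : ν m ≤ k := by
    refine Nat.le_findGreatest (nu_rdvd_le ν hν2 hma) ⟨m, hma, hmb, rfl⟩
  obtain ⟨z, hz⟩ := hm.1
  have : ν z + ν d ≤ ν m := hz ▸ hν2 z d
  have hz0 : ν z = 0 := by omega
  have : z = 1 := eq_one_of_nu ν hν1 hz0
  rw [this, one_mul] at hz
  exact hz ▸ hm.2.1

end Basics

section Delta

variable {A : Type} [Monoid A]

theorem balanced_iff {Δ : A} (hb : IsBalanced Δ) (x : A) : LDvd x Δ ↔ RDvd x Δ := by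
  have := Set.ext_iff.mp hb x; simpa using this

/-- Every factor of `Δ` left- and right-divides `Δ`. -/
theorem factor_dvd {Δ : A} (hb : IsBalanced Δ) {s : A} (hs : s ∈ Factors Δ) :
    LDvd s Δ ∧ RDvd s Δ := by
  obtain ⟨c, d, hcd⟩ := hs
  constructor
  · have h1 : RDvd (s * d) Δ := ⟨c, by rw [hcd, mul_assoc]⟩
    obtain ⟨f, hf⟩ := (balanced_iff hb (s * d)).mpr h1
    exact ⟨d * f, by rw [hf, mul_assoc]⟩
  · have h1 : LDvd (c * s) Δ := ⟨d, hcd⟩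
    obtain ⟨e, he⟩ := (balanced_iff hb (c * s)).mp h1
    exact ⟨e * c, by rw [he, mul_assoc]⟩

/-- Push `Δ` to the right past any element: `Δ * x = z * Δ`. -/
theorem delta_push_right {Δ : A} (hb : IsBalanced Δ)
    (hgen : Submonoid.closure (Factors Δ) = ⊤) (x : A) : ∃ z, Δ * x = z * Δ := by
  have hx : x ∈ Submonoid.closure (Factors Δ) := by rw [hgen]; trivial
  induction hx using Submonoid.closure_induction with
  | mem s hs =>
    obtain ⟨-, t, ht⟩ := factor_dvd hb hs
    obtain ⟨t', ht'⟩ := (balanced_iff hb t).mp ⟨s, ht⟩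
    refine ⟨t', ?_⟩
    nth_rewrite 1 [ht']
    rw [mul_assoc, ← ht]
  | one => exact ⟨1, by rw [mul_one, one_mul]⟩
  | mul x y _ _ ihx ihy =>
    obtain ⟨zx, hzx⟩ := ihx
    obtain ⟨zy, hzy⟩ := ihy
    exact ⟨zx * zy, by rw [← mul_assoc, hzx, mul_assoc, hzy, ← mul_assoc]⟩

/-- Push `Δ` to the left past any element: `x * Δ = Δ * z`. -/
theorem delta_push_left {Δ : A} (hb : IsBalanced Δ)
    (hgen : Submonoid.closure (Factors Δ) = ⊤) (x : A) : ∃ z, x * Δ = Δ * z := by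
  have hx : x ∈ Submonoid.closure (Factors Δ) := by rw [hgen]; trivial
  induction hx using Submonoid.closure_induction with
  | mem s hs =>
    obtain ⟨⟨u, hu⟩, -⟩ := factor_dvd hb hs
    obtain ⟨u', hu'⟩ := (balanced_iff hb u).mpr ⟨s, hu⟩
    refine ⟨u', ?_⟩
    nth_rewrite 2 [hu]
    rw [mul_assoc, ← hu']
  | one => exact ⟨1, by rw [mul_one, one_mul]⟩
  | mul x y _ _ ihx ihy =>
    obtain ⟨zx, hzx⟩ := ihx
    obtain ⟨zy, hzy⟩ := ihy
    exact ⟨zx * zy, by rw [mul_assoc, hzy, ← mul_assoc, hzx, mul_assoc]⟩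

theorem delta_pow_push_right {Δ : A} (hb : IsBalanced Δ)
    (hgen : Submonoid.closure (Factors Δ) = ⊤) (x : A) (k : ℕ) :
    ∃ z, Δ ^ k * x = z * Δ ^ k := by
  induction k with
  | zero => exact ⟨x, by simp⟩
  | succ n ih =>
    obtain ⟨z, hz⟩ := ih
    obtain ⟨w, hw⟩ := delta_push_right hb hgen z
    refine ⟨w, ?_⟩
    rw [pow_succ', mul_assoc, hz, ← mul_assoc, hw, mul_assoc, ← pow_succ']

theorem delta_pow_push_left {Δ : A} (hb : IsBalanced Δ)
    (hgen : Submonoid.closure (Factors Δ) = ⊤) (x : A) (k : ℕ) :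
    ∃ z, x * Δ ^ k = Δ ^ k * z := by
  induction k with
  | zero => exact ⟨x, by simp⟩
  | succ n ih =>
    obtain ⟨z, hz⟩ := ih
    obtain ⟨w, hw⟩ := delta_push_left hb hgen z
    refine ⟨w, ?_⟩
    rw [pow_succ, ← mul_assoc, hz, mul_assoc, hw, ← mul_assoc, ← pow_succ]

/-- Every element left-divides some power of `Δ`. -/
theorem ldvd_delta_pow {Δ : A} (hb : IsBalanced Δ)
    (hgen : Submonoid.closure (Factors Δ) = ⊤) (x : A) : ∃ k, LDvd x (Δ ^ k) := by
  have hx : x ∈ Submonoid.closure (Factors Δ) := by rw [hgen]; trivial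
  induction hx using Submonoid.closure_induction with
  | mem s hs => exact ⟨1, by rw [pow_one]; exact (factor_dvd hb hs).1⟩
  | one => exact ⟨0, by rw [pow_zero]; exact one_ldvd 1⟩
  | mul x y _ _ ihx ihy =>
    obtain ⟨kx, x', hx'⟩ := ihx
    obtain ⟨ky, y', hy'⟩ := ihy
    obtain ⟨w, hw⟩ := delta_pow_push_left hb hgen x' ky
    refine ⟨kx + ky, y' * w, ?_⟩
    rw [pow_add, hx', mul_assoc, hw, hy']
    simp [mul_assoc]

/-- Every element right-divides some power of `Δ`. -/
theorem rdvd_delta_pow {Δ : A} (hb : IsBalanced Δ)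
    (hgen : Submonoid.closure (Factors Δ) = ⊤) (x : A) : ∃ k, RDvd x (Δ ^ k) := by
  have hx : x ∈ Submonoid.closure (Factors Δ) := by rw [hgen]; trivial
  induction hx using Submonoid.closure_induction with
  | mem s hs => exact ⟨1, by rw [pow_one]; exact (factor_dvd hb hs).2⟩
  | one => exact ⟨0, by rw [pow_zero]; exact one_rdvd 1⟩
  | mul x y _ _ ihx ihy =>
    obtain ⟨kx, x', hx'⟩ := ihx
    obtain ⟨ky, y', hy'⟩ := ihy
    obtain ⟨w, hw⟩ := delta_pow_push_right hb hgen y' kx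
    refine ⟨kx + ky, w * x', ?_⟩
    rw [pow_add, hy', ← mul_assoc, hw, hx']
    simp [mul_assoc]

/-- Any two elements have a common right multiple. -/
theorem common_right_mult (hM : IsGarside A) (a b : A) :
    ∃ c, LDvd a c ∧ LDvd b c := by
  obtain ⟨-, Δ, hb, hgen⟩ := hM
  obtain ⟨ka, a', ha⟩ := ldvd_delta_pow hb hgen a
  obtain ⟨kb, b', hbb⟩ := ldvd_delta_pow hb hgen b
  refine ⟨Δ ^ (ka + kb), ⟨a' * Δ ^ kb, ?_⟩, ⟨b' * Δ ^ ka, ?_⟩⟩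
  · rw [pow_add, ha, mul_assoc]
  · rw [add_comm, pow_add, hbb, mul_assoc]

/-- Any two elements have a common left multiple. -/
theorem common_left_mult (hM : IsGarside A) (a b : A) :
    ∃ c, RDvd a c ∧ RDvd b c := by
  obtain ⟨-, Δ, hb, hgen⟩ := hM
  obtain ⟨ka, a', ha⟩ := rdvd_delta_pow hb hgen a
  obtain ⟨kb, b', hbb⟩ := rdvd_delta_pow hb hgen b
  refine ⟨Δ ^ (ka + kb), ⟨Δ ^ kb * a', ?_⟩, ⟨Δ ^ ka * b', ?_⟩⟩
  · rw [add_comm, pow_add, ha, mul_assoc]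
  · rw [pow_add, hbb, mul_assoc]

/-- Left lcms always exist in a Garside monoid. -/
theorem lcmL_total (hM : IsGarside A) (a b : A) : ∃ m, IsLcmL a b m :=
  hM.1.2.2.1 a b (common_right_mult hM a b)

/-- Right lcms always exist in a Garside monoid. -/
theorem lcmR_total (hM : IsGarside A) (a b : A) : ∃ m, IsLcmR a b m :=
  hM.1.2.2.2 a b (common_left_mult hM a b)

theorem gcdL_total (hM : IsGarside A) (a b : A) : ∃ d, IsGcdL a b d := by
  obtain ⟨ν, hν1, hν2⟩ := hM.1.2.1
  exact gcdL_exists hM.1.1 ν hν1 hν2 hM.1.2.2.1 a b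

theorem gcdR_total (hM : IsGarside A) (a b : A) : ∃ d, IsGcdR a b d := by
  obtain ⟨ν, hν1, hν2⟩ := hM.1.2.1
  exact gcdR_exists hM.1.1 ν hν1 hν2 hM.1.2.2.2 a b

end Delta

section Frac

variable {A : Type} [Monoid A]

/-- The fraction relation on pairs. -/
def frel (p q : A × A) : Prop := ∃ u v, p.1 * u = q.1 * v ∧ p.2 * u = q.2 * v

theorem frel_refl (p : A × A) : frel p p := ⟨1, 1, rfl, rfl⟩

theorem frel_symm {p q : A × A} (h : frel p q) : frel q p := by
  obtain ⟨u, v, h1, h2⟩ := h; exact ⟨v, u, h1.symm, h2.symm⟩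

theorem frel_trans (hM : IsGarside A) {p q r : A × A} (h : frel p q) (h' : frel q r) :
    frel p r := by
  obtain ⟨u, v, h1, h2⟩ := h
  obtain ⟨s, t, h3, h4⟩ := h'
  obtain ⟨w, ⟨x, hx⟩, ⟨y, hy⟩⟩ := common_right_mult hM v s
  refine ⟨u * x, t * y, ?_, ?_⟩
  · rw [← mul_assoc, h1, mul_assoc, ← hx, hy, ← mul_assoc, h3, mul_assoc]
  · rw [← mul_assoc, h2, mul_assoc, ← hx, hy, ← mul_assoc, h4, mul_assoc]

theorem frel_equivalence (hM : IsGarside A) : Equivalence (frel (A := A)) :=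
  ⟨frel_refl, frel_symm, fun h h' => frel_trans hM h h'⟩

/-- The set of formal fractions. -/
def FracSp (A : Type) [Monoid A] : Type := Quot (frel (A := A))

theorem frel_lmul {m : A} {p q : A × A} (h : frel p q) :
    frel (m * p.1, p.2) (m * q.1, q.2) := by
  obtain ⟨u, v, h1, h2⟩ := h
  exact ⟨u, v, by rw [mul_assoc, h1, mul_assoc], h2⟩

/-- Left multiplication on fractions. -/
def fmul (m : A) : FracSp A → FracSp A :=
  Quot.map (fun p => (m * p.1, p.2)) (fun _ _ h => frel_lmul h)

theorem exists_pair (hM : IsGarside A) (m c : A) : ∃ xy : A × A, m * xy.1 = c * xy.2 := by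
  obtain ⟨w, ⟨x, hx⟩, ⟨y, hy⟩⟩ := common_right_mult hM m c
  exact ⟨(x, y), by rw [← hx, ← hy]⟩

noncomputable def chX (hM : IsGarside A) (m c : A) : A := (Classical.choose (exists_pair hM m c)).1
noncomputable def chY (hM : IsGarside A) (m c : A) : A := (Classical.choose (exists_pair hM m c)).2

theorem chXY_spec (hM : IsGarside A) (m c : A) : m * chX hM m c = c * chY hM m c :=
  Classical.choose_spec (exists_pair hM m c)

/-- Inverse of left multiplication on fractions. -/
noncomputable def fmulInv (hM : IsGarside A) (m : A) : FracSp A → FracSp A :=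
  Quot.lift (fun p => Quot.mk _ ((chX hM m p.1, p.2 * chY hM m p.1) : A × A))
    (by
      rintro ⟨c, d⟩ ⟨c', d'⟩ ⟨u, v, hcu, hdu⟩
      dsimp only at hcu hdu
      apply Quot.sound
      have hc : m * chX hM m c = c * chY hM m c := chXY_spec hM m c
      have hc' : m * chX hM m c' = c' * chY hM m c' := chXY_spec hM m c'
      obtain ⟨w1, ⟨s1, hs1⟩, ⟨x1, hx1⟩⟩ := common_right_mult hM (chY hM m c) u
      obtain ⟨w2, ⟨t2, ht2⟩, ⟨e2, he2⟩⟩ := common_right_mult hM (chY hM m c') (v * x1)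
      refine ⟨s1 * e2, t2, ?_, ?_⟩
      · apply lcancel hM.1.1 (c := m)
        calc m * (chX hM m c * (s1 * e2)) = (m * chX hM m c * s1) * e2 := by
              simp [mul_assoc]
          _ = (c * (chY hM m c * s1)) * e2 := by rw [hc]; simp [mul_assoc]
          _ = (c * (u * x1)) * e2 := by rw [← hs1, hx1]
          _ = (c * u) * (x1 * e2) := by simp [mul_assoc]
          _ = (c' * v) * (x1 * e2) := by rw [hcu]
          _ = c' * ((v * x1) * e2) := by simp [mul_assoc]
          _ = c' * (chY hM m c' * t2) := by rw [← he2, ht2]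
          _ = (m * chX hM m c') * t2 := by rw [← mul_assoc, ← hc']
          _ = m * (chX hM m c' * t2) := by simp [mul_assoc]
      · calc d * chY hM m c * (s1 * e2) = d * ((chY hM m c * s1) * e2) := by
              simp [mul_assoc]
          _ = d * ((u * x1) * e2) := by rw [← hs1, hx1]
          _ = (d * u) * (x1 * e2) := by simp [mul_assoc]
          _ = (d' * v) * (x1 * e2) := by rw [hdu]
          _ = d' * ((v * x1) * e2) := by simp [mul_assoc]
          _ = d' * (chY hM m c' * t2) := by rw [← he2, ht2]
          _ = d' * chY hM m c' * t2 := by simp [mul_assoc])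

/-- Left multiplication as a permutation of fractions. -/
noncomputable def fperm (hM : IsGarside A) (m : A) : Equiv.Perm (FracSp A) where
  toFun := fmul m
  invFun := fmulInv hM m
  left_inv := by
    intro z
    induction z using Quot.ind with
    | _ p =>
      obtain ⟨a, b⟩ := p
      show fmulInv hM m (Quot.mk _ (m * a, b)) = Quot.mk _ (a, b)
      show Quot.mk _ (chX hM m (m * a), b * chY hM m (m * a)) = Quot.mk _ (a, b)
      have h := chXY_spec hM m (m * a)
      rw [mul_assoc] at h
      have hx : chX hM m (m * a) = a * chY hM m (m * a) := lcancel hM.1.1 h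
      apply Quot.sound
      exact ⟨1, chY hM m (m * a), by rw [mul_one, hx], by rw [mul_one]⟩
  right_inv := by
    intro z
    induction z using Quot.ind with
    | _ p =>
      obtain ⟨c, d⟩ := p
      show fmul m (Quot.mk _ (chX hM m c, d * chY hM m c)) = Quot.mk _ (c, d)
      show Quot.mk _ (m * chX hM m c, d * chY hM m c) = Quot.mk _ (c, d)
      apply Quot.sound
      exact ⟨1, chY hM m c, by rw [mul_one, chXY_spec hM m c], by rw [mul_one]⟩

/-- Left multiplication as a monoid morphism to permutations of fractions. -/
noncomputable def fhom (hM : IsGarside A) : A →* Equiv.Perm (FracSp A) where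
  toFun := fperm hM
  map_one' := by
    ext z
    induction z using Quot.ind with
    | _ p =>
      show Quot.mk frel ((1 : A) * p.1, p.2) = Quot.mk frel p
      exact congrArg (Quot.mk _) (by simp)
  map_mul' := fun m n => by
    ext z
    induction z using Quot.ind with
    | _ p =>
      show Quot.mk frel ((m * n) * p.1, p.2) = Quot.mk frel (m * (n * p.1), p.2)
      exact congrArg (Quot.mk _) (by simp [mul_assoc])

end Frac

section FracG

variable {A : Type} [Monoid A] {G : Type} [Group G]

/-- Fundamental extraction: equal fractions in the enveloping group are related in `A`. -/
theorem frac_eq (hM : IsGarside A) (κ : A →* G) (hκ : IsEnvelopingGroup A G κ)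
    {a b c d : A} (h : κ a * (κ b)⁻¹ = κ c * (κ d)⁻¹) :
    ∃ u v, a * u = c * v ∧ b * u = d * v := by
  obtain ⟨φ, hφ, -⟩ := hκ (Equiv.Perm (FracSp A)) (fhom hM)
  have hφ' : ∀ x : A, φ (κ x) = fperm hM x := fun x => DFunLike.congr_fun hφ x
  have h2 : fperm hM a * (fperm hM b)⁻¹ = fperm hM c * (fperm hM d)⁻¹ := by
    have h0 := congrArg φ h
    simpa only [map_mul, map_inv, hφ'] using h0
  have key : ∀ x y : A, (fperm hM x * (fperm hM y)⁻¹) (Quot.mk _ ((1 : A), (1 : A))) =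
      Quot.mk frel (x, y) := by
    intro x y
    refine (Equiv.Perm.mul_apply _ _ _).trans ?_
    have h3 : (fperm hM y)⁻¹ (Quot.mk _ ((1 : A), (1 : A))) = Quot.mk frel ((1 : A), y) := by
      rw [Equiv.Perm.inv_def]
      refine (Equiv.symm_apply_eq _).mpr ?_
      show Quot.mk frel ((1:A),(1:A)) = Quot.mk frel (y * 1, y)
      apply Quot.sound
      exact ⟨y, 1, by simp, by simp⟩
    rw [h3]
    show Quot.mk frel (x * 1, y) = Quot.mk frel (x, y)
    exact congrArg (Quot.mk _) (by rw [mul_one])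
  have h4 : Quot.mk frel (a, b) = Quot.mk frel (c, d) := by
    rw [← key a b, ← key c d, h2]
  have h5 := Quot.eq.mp h4
  have h6 := (Equivalence.eqvGen_iff (frel_equivalence hM)).mp h5
  obtain ⟨u, v, h7, h8⟩ := h6
  exact ⟨u, v, h7, h8⟩

theorem kappa_inj (hM : IsGarside A) (κ : A →* G) (hκ : IsEnvelopingGroup A G κ)
    {x y : A} (h : κ x = κ y) : x = y := by
  have h' : κ x * (κ 1)⁻¹ = κ y * (κ 1)⁻¹ := by rw [h]
  obtain ⟨u, v, h1, h2⟩ := frac_eq hM κ hκ h'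
  simp only [one_mul] at h2
  rw [h2] at h1
  exact rcancel hM.1.1 h1

/-- Uniqueness of normal forms. -/
theorem nf_unique (hM : IsGarside A) (κ : A →* G) (hκ : IsEnvelopingGroup A G κ)
    {g : G} {a b c d : A} (h1 : NormalForm κ g a b) (h2 : NormalForm κ g c d) :
    a = c ∧ b = d := by
  have hval : κ a * (κ b)⁻¹ = κ c * (κ d)⁻¹ := by rw [← h1.1, ← h2.1]
  obtain ⟨u, v, hac, hbd⟩ := frac_eq hM κ hκ hval
  obtain ⟨ρ, hρ1, hρ2, hρ3⟩ := gcdR_total hM (a * u) (b * u)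
  have hu : RDvd u ρ := hρ3 u ⟨a, rfl⟩ ⟨b, rfl⟩
  have hv : RDvd v ρ := hρ3 v ⟨c, hac⟩ ⟨d, hbd⟩
  obtain ⟨p, hp⟩ := hρ1
  obtain ⟨q, hq⟩ := hρ2
  obtain ⟨c1, hc1⟩ := hu
  obtain ⟨c2, hc2⟩ := hv
  have hap : a = p * c1 := by
    apply rcancel hM.1.1 (d := u)
    rw [hp, hc1, ← mul_assoc]
  have hbq : b = q * c1 := by
    apply rcancel hM.1.1 (d := u)
    rw [hq, hc1, ← mul_assoc]
  have hc1_1 : c1 = 1 := h1.2 c1 ⟨p, hap⟩ ⟨q, hbq⟩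
  rw [hc1_1, mul_one] at hap hbq
  have hcp : c = p * c2 := by
    apply rcancel hM.1.1 (d := v)
    rw [← hac, hp, hc2, ← mul_assoc]
  have hdq : d = q * c2 := by
    apply rcancel hM.1.1 (d := v)
    rw [← hbd, hq, hc2, ← mul_assoc]
  have hc2_1 : c2 = 1 := h2.2 c2 ⟨p, hcp⟩ ⟨q, hdq⟩
  rw [hc2_1, mul_one] at hcp hdq
  exact ⟨hap.trans hcp.symm, hbq.trans hdq.symm⟩

end FracG

section Parab

variable {A : Type} [Monoid A] {G : Type} [Group G]

theorem mem_of_ldvd {P : Submonoid A} (hPs : IsSpecial P) {a c : A} (ha : a ∈ P)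
    (h : LDvd c a) : c ∈ P := by
  obtain ⟨t, rfl⟩ := h; exact (hPs c t ha).1

theorem mem_of_rdvd {P : Submonoid A} (hPs : IsSpecial P) {a c : A} (ha : a ∈ P)
    (h : RDvd c a) : c ∈ P := by
  obtain ⟨t, rfl⟩ := h; exact (hPs t c ha).2

/-- Every element of `G(P)` is a fraction with entries in `P`. -/
theorem frac_of_mem (hM : IsGarside A) (κ : A →* G) {P : Submonoid A}
    (hP : IsParabolic P) {g : G} (hg : g ∈ Subgroup.closure (κ '' (P : Set A))) :
    ∃ a b : A, a ∈ P ∧ b ∈ P ∧ g = κ a * (κ b)⁻¹ := by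
  induction hg using Subgroup.closure_induction with
  | mem x hx =>
    obtain ⟨a, ha, rfl⟩ := hx
    exact ⟨a, 1, ha, P.one_mem, by simp⟩
  | one => exact ⟨1, 1, P.one_mem, P.one_mem, by simp⟩
  | mul x y hx hy ihx ihy =>
    obtain ⟨a, b, ha, hb, hx'⟩ := ihx
    obtain ⟨c, d, hc, hd, hy'⟩ := ihy
    obtain ⟨L, hL⟩ := lcmL_total hM b c
    obtain ⟨c1, hc1⟩ := hL.1
    obtain ⟨b2, hb2⟩ := hL.2.1
    have hLP : L ∈ P := hP.2.1 b c L hb hc hL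
    have hc1P : c1 ∈ P := (hP.1 b c1 (hc1 ▸ hLP)).2
    have hb2P : b2 ∈ P := (hP.1 c b2 (hb2 ▸ hLP)).2
    have hκL : κ b * κ c1 = κ c * κ b2 := by
      rw [← map_mul, ← map_mul, ← hc1, ← hb2]
    have key : (κ b)⁻¹ * κ c = κ c1 * (κ b2)⁻¹ := by
      rw [inv_mul_eq_iff_eq_mul, ← mul_assoc, eq_mul_inv_iff_mul_eq]
      exact hκL.symm
    refine ⟨a * c1, d * b2, P.mul_mem ha hc1P, P.mul_mem hd hb2P, ?_⟩
    have hshape : κ a * (κ b)⁻¹ * (κ c * (κ d)⁻¹) = κ a * ((κ b)⁻¹ * κ c) * (κ d)⁻¹ := by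
      group
    rw [hx', hy', hshape, key, map_mul, map_mul, mul_inv_rev]
    group
  | inv x hx ih =>
    obtain ⟨a, b, ha, hb, hx'⟩ := ih
    exact ⟨b, a, hb, ha, by rw [hx']; group⟩

/-- Strip common right divisors, staying in a special submonoid. -/
theorem exists_reduced (hM : IsGarside A) {P : Submonoid A} (hPs : IsSpecial P)
    (a b : A) (ha : a ∈ P) (hb : b ∈ P) :
    ∃ a' b' t, a' ∈ P ∧ b' ∈ P ∧ (∀ c, RDvd c a' → RDvd c b' → c = 1) ∧
      a = a' * t ∧ b = b' * t := by
  classical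
  obtain ⟨ν, hν1, hν2⟩ := hM.1.2.1
  have main : ∀ n, ∀ a b : A, a ∈ P → b ∈ P → ν a + ν b ≤ n →
      ∃ a' b' t, a' ∈ P ∧ b' ∈ P ∧ (∀ c, RDvd c a' → RDvd c b' → c = 1) ∧
        a = a' * t ∧ b = b' * t := by
    intro n
    induction n using Nat.strong_induction_on with
    | _ n ih =>
      intro a b ha hb hn
      by_cases hcc : ∃ c, c ≠ 1 ∧ RDvd c a ∧ RDvd c b
      · obtain ⟨c, hc1, ⟨a0, ha0⟩, ⟨b0, hb0⟩⟩ := hcc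
        have ha0P : a0 ∈ P := (hPs a0 c (ha0 ▸ ha)).1
        have hb0P : b0 ∈ P := (hPs b0 c (hb0 ▸ hb)).1
        have hνc : 0 < ν c := hν1 c hc1
        have h1 : ν a0 + ν c ≤ ν a := ha0 ▸ hν2 a0 c
        have h2 : ν b0 + ν c ≤ ν b := hb0 ▸ hν2 b0 c
        have hlt : ν a0 + ν b0 < n := by omega
        obtain ⟨a', b', t, hP1, hP2, hred, he1, he2⟩ :=
          ih (ν a0 + ν b0) hlt a0 b0 ha0P hb0P le_rfl
        exact ⟨a', b', t * c, hP1, hP2, hred,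
          by rw [ha0, he1, mul_assoc], by rw [hb0, he2, mul_assoc]⟩
      · push_neg at hcc
        refine ⟨a, b, 1, ha, hb, ?_, (mul_one a).symm, (mul_one b).symm⟩
        intro c h1 h2
        by_contra hne
        exact (hcc c hne h1) h2
  exact main (ν a + ν b) a b ha hb le_rfl

/-- Every element of `G(P)` has a normal form with entries in `P`. -/
theorem nf_of_mem (hM : IsGarside A) (κ : A →* G) {P : Submonoid A}
    (hP : IsParabolic P) {g : G} (hg : g ∈ Subgroup.closure (κ '' (P : Set A))) :
    ∃ a b : A, a ∈ P ∧ b ∈ P ∧ NormalForm κ g a b := by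
  obtain ⟨a, b, ha, hb, hval⟩ := frac_of_mem hM κ hP hg
  obtain ⟨a', b', t, ha', hb', hred, he1, he2⟩ := exists_reduced hM hP.1 a b ha hb
  refine ⟨a', b', ha', hb', ?_, hred⟩
  rw [hval, he1, he2, map_mul, map_mul, mul_inv_rev]
  group

/-- An arbitrary normal form of an element of `G(P)` has entries in `P`. -/
theorem mem_of_nf (hM : IsGarside A) (κ : A →* G) (hκ : IsEnvelopingGroup A G κ)
    {P : Submonoid A} (hP : IsParabolic P) {g : G}
    (hg : g ∈ Subgroup.closure (κ '' (P : Set A))) {a b : A}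
    (h : NormalForm κ g a b) : a ∈ P ∧ b ∈ P := by
  obtain ⟨a', b', ha', hb', hnf⟩ := nf_of_mem hM κ hP hg
  obtain ⟨h1, h2⟩ := nf_unique hM κ hκ h hnf
  exact ⟨h1 ▸ ha', h2 ▸ hb'⟩

theorem top_parabolic : IsParabolic (⊤ : Submonoid A) :=
  ⟨fun _ _ _ => ⟨trivial, trivial⟩, fun _ _ _ _ _ _ => trivial, fun _ _ _ _ _ _ => trivial⟩

/-- The enveloping group is generated by the image of the monoid. -/
theorem mem_closure_top (κ : A →* G) (hκ : IsEnvelopingGroup A G κ) (g : G) :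
    g ∈ Subgroup.closure (κ '' ((⊤ : Submonoid A) : Set A)) := by
  set G₀ := Subgroup.closure (κ '' ((⊤ : Submonoid A) : Set A)) with hG₀
  have hmem : ∀ x : A, κ x ∈ G₀ := fun x =>
    Subgroup.subset_closure ⟨x, trivial, rfl⟩
  set κ₀ : A →* ↥G₀ := κ.codRestrict G₀ hmem with hκ₀
  obtain ⟨φ₀, hφ₀, -⟩ := hκ ↥G₀ κ₀
  obtain ⟨ψ, -, huniq⟩ := hκ G κ
  have e1 : ψ = MonoidHom.id G := (huniq (MonoidHom.id G) (by ext x; simp)).symm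
  have e2 : ψ = G₀.subtype.comp φ₀ := by
    refine (huniq (G₀.subtype.comp φ₀) ?_).symm
    ext x
    have : φ₀ (κ x) = κ₀ x := DFunLike.congr_fun hφ₀ x
    simp only [MonoidHom.comp_apply, this, hκ₀]
    rfl
  have : MonoidHom.id G = G₀.subtype.comp φ₀ := e1 ▸ e2
  have hg : g = ((φ₀ g : ↥G₀) : G) := by
    have := DFunLike.congr_fun this g
    simpa using this
  rw [hg]
  exact SetLike.coe_mem _

/-- Every element of the enveloping group has a normal form. -/
theorem nf_exists (hM : IsGarside A) (κ : A →* G) (hκ : IsEnvelopingGroup A G κ)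
    (g : G) : ∃ a b : A, NormalForm κ g a b := by
  obtain ⟨a, b, -, -, h⟩ := nf_of_mem hM κ top_parabolic (mem_closure_top κ hκ g)
  exact ⟨a, b, h⟩

end Parab

section PartA

variable {A : Type} [Monoid A] {G : Type} [Group G]

theorem kappa_mem_cl (κ : A →* G) {P : Submonoid A} {x : A} (hx : x ∈ P) :
    κ x ∈ Subgroup.closure (κ '' (P : Set A)) :=
  Subgroup.subset_closure ⟨x, hx, rfl⟩

theorem frac_mem_cl (κ : A →* G) {P : Submonoid A} {x y : A} (hx : x ∈ P) (hy : y ∈ P) :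
    κ x * (κ y)⁻¹ ∈ Subgroup.closure (κ '' (P : Set A)) :=
  mul_mem (kappa_mem_cl κ hx) (inv_mem (kappa_mem_cl κ hy))

/-- Part (A) of Proposition 4.5. -/
theorem partA (hM : IsGarside A) {N K : Submonoid A} (hK : IsParabolic K)
    (κ : A →* G) (hκ : IsEnvelopingGroup A G κ) {g₁ g₂ : G}
    (hg₂ : g₂ ∈ Subgroup.closure (κ '' (K : Set A))) (h : leN κ N g₁ g₂) :
    g₁ ∈ Subgroup.closure (κ '' (K : Set A)) := by
  obtain ⟨ν, hν1, hν2⟩ := hM.1.2.1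
  have hc := hM.1.1
  obtain ⟨a₁, b₁, a₂, b₂, hnf1, hnf2, h₁, hh₁, h₂, hh₂, a, ha₂, heq, d₀, hgcd1, hgcd2⟩ := h
  obtain ⟨ha₂K, hb₂K⟩ := mem_of_nf hM κ hκ hK hg₂ hnf2
  have ha₁K : a₁ ∈ K := (hK.1 a₁ a (ha₂ ▸ ha₂K)).1
  have haK : a ∈ K := (hK.1 a₁ a (ha₂ ▸ ha₂K)).2
  obtain ⟨e₂, he₂⟩ := hgcd1.1
  obtain ⟨e₁, he₁⟩ := hgcd1.2.1
  -- cancel d₀ in the main equation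
  have heq' : e₂ * b₂ = e₁ * b₁ * a := by
    apply lcancel hc (c := d₀)
    calc d₀ * (e₂ * b₂) = (d₀ * e₂) * b₂ := by rw [mul_assoc]
      _ = h₂ * b₂ := by rw [← he₂]
      _ = h₁ * b₁ * a := heq
      _ = d₀ * (e₁ * b₁ * a) := by rw [he₁]; simp [mul_assoc]
  -- triviality of common left divisors of e₂ and e₁ * b₁
  have htriv : ∀ c, LDvd c e₂ → LDvd c (e₁ * b₁) → c = 1 := by
    intro c ⟨s, hs⟩ ⟨t, ht⟩
    have h1 : LDvd (d₀ * c) h₂ := ⟨s, by rw [he₂, hs, mul_assoc]⟩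
    have h2 : LDvd (d₀ * c) (h₁ * b₁) := ⟨t, by rw [he₁, mul_assoc, ht, mul_assoc]⟩
    obtain ⟨w, hw⟩ := hgcd2.2.2 (d₀ * c) h1 h2
    have : d₀ * 1 = d₀ * (c * w) := by rw [mul_one, ← mul_assoc]; exact hw
    have hcw : (1 : A) = c * w := lcancel hc this
    exact (mul_eq_one_iff ν hν1 hν2 hcw.symm).1
  set u := e₁ * b₁ with hu
  set v := e₂ with hv
  have hcom : v * b₂ = u * a := by rw [hu, hv, heq', mul_assoc]
  obtain ⟨L, hL⟩ := lcmL_total hM u v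
  obtain ⟨qt, hqt⟩ := hL.1
  obtain ⟨pt, hpt⟩ := hL.2.1
  have hLvb : LDvd L (v * b₂) := hL.2.2 (v * b₂) ⟨a, hcom⟩ ⟨b₂, rfl⟩
  obtain ⟨r, hr⟩ := hLvb
  have hb₂ : b₂ = pt * r := by
    apply lcancel hc (c := v)
    rw [hr, hpt, mul_assoc]
  have hptK : pt ∈ K := (hK.1 pt r (hb₂ ▸ hb₂K)).1
  have hrK : r ∈ K := (hK.1 pt r (hb₂ ▸ hb₂K)).2
  have ha' : a = qt * r := by
    apply lcancel hc (c := u)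
    rw [← hcom, hr, hqt, mul_assoc]
  have hqtK : qt ∈ K := (hK.1 qt r (ha' ▸ haK)).1
  obtain ⟨ω, hω⟩ := hM.1.2.2.2 qt pt ⟨L, ⟨u, hqt⟩, ⟨v, hpt⟩⟩
  have hωK : ω ∈ K := hK.2.2 qt pt ω hqtK hptK hω
  obtain ⟨lam, hlam⟩ := hω.2.2 L ⟨u, hqt⟩ ⟨v, hpt⟩
  obtain ⟨ω₁, hω₁⟩ := hω.1
  obtain ⟨ω₂, hω₂⟩ := hω.2.1
  have hu' : u = lam * ω₁ := by
    apply rcancel hc (d := qt)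
    rw [← hqt, hlam, hω₁, ← mul_assoc]
  have hv' : v = lam * ω₂ := by
    apply rcancel hc (d := pt)
    rw [← hpt, hlam, hω₂, ← mul_assoc]
  have hlam1 : lam = 1 := htriv lam ⟨ω₂, hv'⟩ ⟨ω₁, hu'⟩
  have hLK : L ∈ K := by rw [hlam, hlam1, one_mul]; exact hωK
  have huK : u ∈ K := (hK.1 u qt (hqt ▸ hLK)).1
  have hb₁K : b₁ ∈ K := (hK.1 e₁ b₁ huK).2
  rw [hnf1.1]
  exact frac_mem_cl κ ha₁K hb₁K

end PartA

section PartBTools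

variable {A : Type} [Monoid A] {G : Type} [Group G]

theorem frac_glue (κ : A →* G) {b c c1 b2 : A} (h : b * c1 = c * b2) :
    (κ b)⁻¹ * κ c = κ c1 * (κ b2)⁻¹ := by
  have hκ : κ b * κ c1 = κ c * κ b2 := by rw [← map_mul, ← map_mul, h]
  rw [inv_mul_eq_iff_eq_mul, ← mul_assoc, eq_mul_inv_iff_mul_eq]
  exact hκ.symm

/-- Cancelling an `N`-prefix from an `N * K` product leaves an `N * K` product. -/
theorem nk_left (hM : IsGarside A) {N K : Submonoid A} (hN : IsParabolic N)
    (hKs : IsSpecial K) {d₁ h₁ b₁ w : A} (hd₁ : d₁ ∈ N) (hh₁ : h₁ ∈ N) (hb₁ : b₁ ∈ K)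
    (hw : h₁ * b₁ = d₁ * w) : ∃ h' b', h' ∈ N ∧ b' ∈ K ∧ w = h' * b' := by
  have hc := hM.1.1
  obtain ⟨F, hF⟩ := hM.1.2.2.1 h₁ d₁ ⟨h₁ * b₁, ⟨b₁, rfl⟩, ⟨w, hw⟩⟩
  obtain ⟨n₁, hn₁⟩ := hF.1
  obtain ⟨n₂, hn₂⟩ := hF.2.1
  have hFN : F ∈ N := hN.2.1 h₁ d₁ F hh₁ hd₁ hF
  have hn₁N : n₁ ∈ N := (hN.1 h₁ n₁ (hn₁ ▸ hFN)).2
  have hn₂N : n₂ ∈ N := (hN.1 d₁ n₂ (hn₂ ▸ hFN)).2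
  obtain ⟨t, ht⟩ := hF.2.2 (h₁ * b₁) ⟨b₁, rfl⟩ ⟨w, hw⟩
  have hb₁t : b₁ = n₁ * t := by
    apply lcancel hc (c := h₁)
    rw [ht, hn₁, mul_assoc]
  have htK : t ∈ K := (hKs n₁ t (hb₁t ▸ hb₁)).2
  refine ⟨n₂, t, hn₂N, htK, ?_⟩
  apply lcancel hc (c := d₁)
  rw [← hw, ht, hn₂, mul_assoc]

/-- The key rewriting step ("dance"). -/
theorem dance (hM : IsGarside A) {N K : Submonoid A} (hN : IsParabolic N)
    (hK : IsParabolic K) {H N₁ b₁ a₁ α β ρ t : A} (hH : H ∈ N) (hN₁ : N₁ ∈ N)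
    (hb₁ : b₁ ∈ K) (ha₁ : a₁ ∈ K) (heq : H * β * ρ = N₁ * b₁ * t)
    (hα : α * ρ = a₁ * t) :
    ∃ aK nW bK aM, aK ∈ K ∧ nW ∈ N ∧ bK ∈ K ∧ α = aK * aM ∧
      H * β = nW * bK * aM := by
  have hc := hM.1.1
  simp only [mul_assoc] at heq
  -- Step 1: split off the common right divisor of ρ and t
  obtain ⟨e, ⟨ρ₀, hρ₀⟩, ⟨t₀, ht₀⟩, hemax⟩ := gcdR_total hM ρ t
  have heq₀ : H * (β * ρ₀) = N₁ * (b₁ * t₀) := by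
    apply rcancel hc (d := e)
    simp only [mul_assoc]
    rw [← hρ₀, ← ht₀]
    exact heq
  have hα₀ : α * ρ₀ = a₁ * t₀ := by
    apply rcancel hc (d := e)
    simp only [mul_assoc]
    rw [← hρ₀, ← ht₀]
    exact hα
  -- Step 4: right lcm of t₀ and ρ₀
  obtain ⟨V, hV⟩ := hM.1.2.2.2 t₀ ρ₀ ⟨a₁ * t₀, ⟨a₁, rfl⟩, ⟨α, hα₀.symm⟩⟩
  obtain ⟨P, hP⟩ := hV.1
  obtain ⟨Q, hQ⟩ := hV.2.1
  -- Step 5: right-swap on the numerator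
  obtain ⟨s, hs⟩ := hV.2.2 (a₁ * t₀) ⟨a₁, rfl⟩ ⟨α, hα₀.symm⟩
  have ha₁s : a₁ = s * P := by
    apply rcancel hc (d := t₀)
    simp only [mul_assoc]
    rw [← hP]
    exact hs
  have hsK : s ∈ K := (hK.1 s P (ha₁s ▸ ha₁)).1
  have hPK : P ∈ K := (hK.1 s P (ha₁s ▸ ha₁)).2
  -- Step 6: α = s * Q
  have hαQ : α = s * Q := by
    apply rcancel hc (d := ρ₀)
    simp only [mul_assoc]
    rw [← hQ, hα₀]
    exact hs
  -- Step 7: right-swap on the denominator side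
  obtain ⟨X₀, hX₀⟩ := hV.2.2 (N₁ * (b₁ * t₀)) ⟨N₁ * b₁, (mul_assoc N₁ b₁ t₀).symm⟩
    ⟨H * β, by rw [mul_assoc]; exact heq₀.symm⟩
  have hNb : N₁ * b₁ = X₀ * P := by
    apply rcancel hc (d := t₀)
    simp only [mul_assoc]
    rw [← hP]
    exact hX₀
  -- Step 8: N·K structure of X₀
  obtain ⟨e₂, ⟨P₀, hP₀⟩, ⟨B₀, hB₀⟩, he₂max⟩ := gcdR_total hM P b₁
  have hP₀K : P₀ ∈ K := (hK.1 P₀ e₂ (hP₀ ▸ hPK)).1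
  have he₂K : e₂ ∈ K := (hK.1 P₀ e₂ (hP₀ ▸ hPK)).2
  have hB₀K : B₀ ∈ K := (hK.1 B₀ e₂ (hB₀ ▸ hb₁)).1
  have hNB₀ : N₁ * B₀ = X₀ * P₀ := by
    apply rcancel hc (d := e₂)
    simp only [mul_assoc]
    rw [← hB₀, ← hP₀]
    exact hNb
  obtain ⟨V₂, hV₂⟩ := hM.1.2.2.2 B₀ P₀ ⟨N₁ * B₀, ⟨N₁, rfl⟩, ⟨X₀, hNB₀⟩⟩
  obtain ⟨P₂, hP₂⟩ := hV₂.1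
  obtain ⟨B₂, hB₂⟩ := hV₂.2.1
  obtain ⟨W, hW⟩ := hV₂.2.2 (N₁ * B₀) ⟨N₁, rfl⟩ ⟨X₀, hNB₀⟩
  have hN₁W : N₁ = W * P₂ := by
    apply rcancel hc (d := B₀)
    simp only [mul_assoc]
    rw [← hP₂]
    exact hW
  have hWN : W ∈ N := (hN.1 W P₂ (hN₁W ▸ hN₁)).1
  have hV₂K : V₂ ∈ K := hK.2.2 B₀ P₀ V₂ hB₀K hP₀K hV₂
  have hB₂K : B₂ ∈ K := (hK.1 B₂ P₀ (hB₂ ▸ hV₂K)).1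
  have hX₀W : X₀ = W * B₂ := by
    apply rcancel hc (d := P₀)
    rw [← hNB₀, hN₁W]
    simp only [mul_assoc]
    rw [← hP₂, hB₂]
  -- Step 9: conclude
  refine ⟨s, W, B₂, Q, hsK, hWN, hB₂K, hαQ, ?_⟩
  apply rcancel hc (d := ρ₀)
  have h9 : H * (β * ρ₀) = W * B₂ * Q * ρ₀ := by
    rw [heq₀, hX₀, hX₀W, hQ]
    simp only [mul_assoc]
  rw [← mul_assoc] at h9
  exact h9

end PartBTools

section Repair

variable {A : Type} [Monoid A]

/-- Repair a raw certificate into a balanced & reduced one. -/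
theorem repair (hM : IsGarside A) {N K : Submonoid A} (hN : IsParabolic N)
    (hK : IsParabolic K) {α β : A}
    (hcert : ∃ a₁ b₁ a h₁ h₂ : A, a₁ ∈ K ∧ b₁ ∈ K ∧ h₁ ∈ N ∧ h₂ ∈ N ∧
      α = a₁ * a ∧ h₂ * β = h₁ * b₁ * a) :
    ∃ a₁ b₁ a h₁ h₂ d₀ : A, a₁ ∈ K ∧ b₁ ∈ K ∧ h₁ ∈ N ∧ h₂ ∈ N ∧
      α = a₁ * a ∧ h₂ * β = h₁ * b₁ * a ∧
      IsGcdL h₂ h₁ d₀ ∧ IsGcdL h₂ (h₁ * b₁) d₀ ∧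
      (∀ c, RDvd c a₁ → RDvd c b₁ → c = 1) := by
  classical
  have hc := hM.1.1
  obtain ⟨ν, hν1, hν2⟩ := hM.1.2.1
  obtain ⟨a₁, b₁, a, h₁, h₂, ha₁K, hb₁K, hh₁N, hh₂N, hα, heq⟩ := hcert
  -- Phase 1 : balance by induction on ν h₂
  have phase1 : ∀ n, ∀ b₁ h₁ h₂ : A, b₁ ∈ K → h₁ ∈ N → h₂ ∈ N → ν h₂ ≤ n →
      h₂ * β = h₁ * b₁ * a →
      ∃ b₁' h₁' h₂' d₀, b₁' ∈ K ∧ h₁' ∈ N ∧ h₂' ∈ N ∧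
        h₂' * β = h₁' * b₁' * a ∧ IsGcdL h₂' h₁' d₀ ∧ IsGcdL h₂' (h₁' * b₁') d₀ := by
    intro n
    induction n using Nat.strong_induction_on with
    | _ n ih =>
      intro b₁ h₁ h₂ hb₁K hh₁N hh₂N hn heq
      obtain ⟨d₁, hd₁⟩ := gcdL_total hM h₂ (h₁ * b₁)
      by_cases hd : LDvd d₁ h₁
      · refine ⟨b₁, h₁, h₂, d₁, hb₁K, hh₁N, hh₂N, heq,
          ⟨hd₁.1, hd, fun c hc1 hc2 => hd₁.2.2 c hc1 (ldvd_trans hc2 (ldvd_mul h₁ b₁))⟩,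
          hd₁⟩
      · have hd₁ne : d₁ ≠ 1 := by
          intro h; exact hd (h ▸ one_ldvd h₁)
        obtain ⟨h₂'', hsplit2⟩ := hd₁.1
        obtain ⟨w, hdw⟩ := hd₁.2.1
        have hd₁N : d₁ ∈ N := (hN.1 d₁ h₂'' (hsplit2 ▸ hh₂N)).1
        have hh₂''N : h₂'' ∈ N := (hN.1 d₁ h₂'' (hsplit2 ▸ hh₂N)).2
        obtain ⟨h₁'', b₁'', hh₁''N, hb₁''K, hwnk⟩ :=
          nk_left hM hN hK.1 hd₁N hh₁N hb₁K hdw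
        have heq'' : h₂'' * β = h₁'' * b₁'' * a := by
          apply lcancel hc (c := d₁)
          rw [← mul_assoc, ← hsplit2, heq, hdw, hwnk]
          simp only [mul_assoc]
        have hν2' : ν h₂'' < n := by
          have h1 : ν d₁ + ν h₂'' ≤ ν h₂ := hsplit2 ▸ hν2 d₁ h₂''
          have h2 : 0 < ν d₁ := hν1 d₁ hd₁ne
          omega
        exact ih (ν h₂'') hν2' b₁'' h₁'' h₂'' hb₁''K hh₁''N hh₂''N le_rfl heq''
  obtain ⟨b₁f, h₁f, h₂f, d₀, hb₁fK, hh₁fN, hh₂fN, heqf, hgcd1, hgcd2⟩ :=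
    phase1 (ν h₂) b₁ h₁ h₂ hb₁K hh₁N hh₂N le_rfl heq
  -- Phase 2 : reduce (a₁, b₁f)
  obtain ⟨ρ, ⟨a₁', ha₁'⟩, ⟨b₁'', hb₁''⟩, hρmax⟩ := gcdR_total hM a₁ b₁f
  have ha₁'K : a₁' ∈ K := (hK.1 a₁' ρ (ha₁' ▸ ha₁K)).1
  have hρK : ρ ∈ K := (hK.1 a₁' ρ (ha₁' ▸ ha₁K)).2
  have hb₁''K : b₁'' ∈ K := (hK.1 b₁'' ρ (hb₁'' ▸ hb₁fK)).1
  refine ⟨a₁', b₁'', ρ * a, h₁f, h₂f, d₀, ha₁'K, hb₁''K, hh₁fN, hh₂fN, ?_, ?_, hgcd1, ?_, ?_⟩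
  · rw [hα, ha₁']
    simp only [mul_assoc]
  · rw [heqf, hb₁'']
    simp only [mul_assoc]
  · refine ⟨hgcd2.1.imp ?_, ldvd_trans hgcd1.2.1 (ldvd_mul h₁f b₁''), ?_⟩
    · intro x hx; exact hx
    · intro c hc1 hc2
      refine hgcd2.2.2 c hc1 (ldvd_trans hc2 ?_)
      refine ⟨ρ, ?_⟩
      rw [hb₁'']
      simp only [mul_assoc]
  · intro c ⟨s, hs⟩ ⟨t, ht⟩
    have h1 : RDvd (c * ρ) a₁ := ⟨s, by rw [ha₁', hs, mul_assoc]⟩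
    have h2 : RDvd (c * ρ) b₁f := ⟨t, by rw [hb₁'', ht, mul_assoc]⟩
    obtain ⟨z, hz⟩ := hρmax (c * ρ) h1 h2
    have : (1 : A) * ρ = (z * c) * ρ := by
      rw [one_mul, mul_assoc]; exact hz
    have h3 : (1 : A) = z * c := rcancel hc this
    exact (mul_eq_one_iff ν hν1 hν2 h3.symm).2

end Repair

section PartB

variable {A : Type} [Monoid A] {G : Type} [Group G]

/-- Part (B) of Proposition 4.5. -/
theorem partB (hM : IsGarside A) {N K : Submonoid A} (hN : IsParabolic N)
    (hK : IsParabolic K) (κ : A →* G) (hκ : IsEnvelopingGroup A G κ) {g₂ m : G}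
    (hg₂ : g₂ ∈ Subgroup.closure (κ '' (K : Set A)))
    (hm : g₂⁻¹ * m ∈ Subgroup.closure (κ '' (N : Set A)))
    (hmin : ∀ x : G, g₂⁻¹ * x ∈ Subgroup.closure (κ '' (N : Set A)) →
      leN κ N x m → x = m) :
    m ∈ Subgroup.closure (κ '' (K : Set A)) := by
  have hc := hM.1.1
  obtain ⟨p, q, hpK, hqK, hnfg₂⟩ := nf_of_mem hM κ hK hg₂
  obtain ⟨c, d, hcN, hdN, hωval⟩ := frac_of_mem hM κ hN hm
  have hmval : m = g₂ * (κ c * (κ d)⁻¹) := by rw [← hωval]; group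
  obtain ⟨Lq, hLq⟩ := lcmL_total hM q c
  obtain ⟨c₁, hc₁⟩ := hLq.1
  obtain ⟨q₁, hq₁⟩ := hLq.2.1
  have hglue : (κ q)⁻¹ * κ c = κ c₁ * (κ q₁)⁻¹ := frac_glue κ (by rw [← hc₁, ← hq₁])
  have hmval2 : m = κ (p * c₁) * (κ (d * q₁))⁻¹ := by
    rw [hmval, hnfg₂.1, map_mul, map_mul, mul_inv_rev]
    have hshape : κ p * (κ q)⁻¹ * (κ c * (κ d)⁻¹) =
        κ p * ((κ q)⁻¹ * κ c) * (κ d)⁻¹ := by group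
    rw [hshape, hglue]
    group
  -- stage 1 : strip (p * c₁, q₁)
  obtain ⟨α', β', ρ', -, -, hred', hstr1, hstr2⟩ :=
    exists_reduced hM (P := (⊤ : Submonoid A)) top_parabolic.1 (p * c₁) q₁
      (Submonoid.mem_top _) (Submonoid.mem_top _)
  -- first dance
  have heqd1 : c * β' * ρ' = 1 * q * c₁ := by
    rw [mul_assoc, ← hstr2, ← hq₁, hc₁, one_mul]
  have hαd1 : α' * ρ' = p * c₁ := hstr1.symm
  obtain ⟨a₁', W1, b1', aM1, ha₁'K, hW1N, hb1'K, hα'eq, hdance1⟩ :=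
    dance hM hN hK hcN (one_mem N) hqK hpK heqd1 hαd1
  -- stage 2 : strip (α', d * β')
  obtain ⟨α, β, ρ₂, -, -, hred, hs1, hs2⟩ :=
    exists_reduced hM (P := (⊤ : Submonoid A)) top_parabolic.1 α' (d * β')
      (Submonoid.mem_top _) (Submonoid.mem_top _)
  have hsnum : p * c₁ = α * ρ₂ * ρ' := by rw [hstr1, hs1]
  have hden : d * q₁ = β * ρ₂ * ρ' := by rw [hstr2, ← mul_assoc, hs2]
  have hmnf : NormalForm κ m α β := by
    refine ⟨?_, hred⟩
    rw [hmval2, hsnum, hden, map_mul, map_mul, map_mul, map_mul, mul_inv_rev,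
      mul_inv_rev]
    group
  -- commuting choice inside N
  obtain ⟨Wdc, hWdc⟩ := lcmR_total hM d c
  obtain ⟨x₁, hx₁⟩ := hWdc.1
  obtain ⟨x₂, hx₂⟩ := hWdc.2.1
  have hWdcN : Wdc ∈ N := hN.2.2 d c Wdc hdN hcN hWdc
  have hx₁N : x₁ ∈ N := (hN.1 x₁ d (hx₁ ▸ hWdcN)).1
  have hx₂N : x₂ ∈ N := (hN.1 x₂ c (hx₂ ▸ hWdcN)).1
  -- second dance
  have heqd2 : x₁ * β * ρ₂ = x₂ * W1 * b1' * aM1 := by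
    rw [mul_assoc, ← hs2, ← mul_assoc, ← hx₁, hx₂, mul_assoc, hdance1]
    simp only [mul_assoc]
  have hαd2 : α * ρ₂ = a₁' * aM1 := by rw [← hs1, hα'eq]
  obtain ⟨a₁'', W₂, b'', aM2, ha₁''K, hW₂N, hb''K, hαeq2, hdance2⟩ :=
    dance hM hN hK hx₁N (mul_mem hx₂N hW1N) hb1'K ha₁'K heqd2 hαd2
  -- repair
  obtain ⟨a₁f, b₁f, af, h₁f, h₂f, d₀, ha₁fK, hb₁fK, hh₁fN, hh₂fN, hαf, heqf,
    hgcd1, hgcd2, hredf⟩ :=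
    repair hM hN hK ⟨a₁'', b'', aM2, W₂, x₁, ha₁''K, hb''K, hW₂N, hx₁N, hαeq2, hdance2⟩
  set x : G := κ a₁f * (κ b₁f)⁻¹ with hxdef
  have hxnf : NormalForm κ x a₁f b₁f := ⟨rfl, hredf⟩
  have hle : leN κ N x m :=
    ⟨a₁f, b₁f, α, β, hxnf, hmnf, h₁f, hh₁fN, h₂f, hh₂fN, af, hαf, heqf,
      ⟨d₀, hgcd1, hgcd2⟩⟩
  have hxval : x = m * (κ h₂f)⁻¹ * κ h₁f := by
    rw [hxdef, hmnf.1]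
    have e2 : κ α = κ a₁f * κ af := by rw [← map_mul, ← hαf]
    have e1 : κ h₂f * κ β = κ h₁f * κ b₁f * κ af := by
      rw [← map_mul, ← map_mul, ← map_mul, heqf]
    have e3 : κ β = (κ h₂f)⁻¹ * (κ h₁f * κ b₁f * κ af) := by rw [← e1]; group
    rw [e2, e3]
    group
  have hcos : g₂⁻¹ * x ∈ Subgroup.closure (κ '' (N : Set A)) := by
    rw [hxval]
    have hshape : g₂⁻¹ * (m * (κ h₂f)⁻¹ * κ h₁f) =
        (g₂⁻¹ * m) * (κ h₂f)⁻¹ * κ h₁f := by group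
    rw [hshape]
    exact mul_mem (mul_mem hm (inv_mem (kappa_mem_cl κ hh₂fN))) (kappa_mem_cl κ hh₁fN)
  have hxm : x = m := hmin x hcos hle
  rw [← hxm, hxdef]
  exact frac_mem_cl κ ha₁fK hb₁fK

end PartB

/-- **Proposition 4.5.** Let `M` be a Garside monoid, `N, K` parabolic submonoids, and
`g₁, g₂ ∈ G(M)` with `g₂ ∈ G(K)`. If `g₁ ≤_N g₂` then `g₁ ∈ G(K)`; in particular the
`≤_N`-minimal representative `m_N(g₂)` of `g₂ G(N)` lies in `G(K)`. -/
theorem proposition_4_5 {M : Type} [Monoid M] (hM : IsGarside M)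
    (N K : Submonoid M) (hN : IsParabolic N) (hK : IsParabolic K)
    {G : Type} [Group G] (κ : M →* G) (hκ : IsEnvelopingGroup M G κ)
    (g₁ g₂ : G) (hg₂ : g₂ ∈ Subgroup.closure (κ '' (K : Set M))) :
    (leN κ N g₁ g₂ → g₁ ∈ Subgroup.closure (κ '' (K : Set M))) ∧
    ∀ m : G, (g₂⁻¹ * m ∈ Subgroup.closure (κ '' (N : Set M)) ∧
        ∀ x : G, g₂⁻¹ * x ∈ Subgroup.closure (κ '' (N : Set M)) → leN κ N x m → x = m) →
      m ∈ Subgroup.closure (κ '' (K : Set M)) := by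
  refine ⟨fun h => partA hM hK κ hκ hg₂ h, fun m hyp => partB hM hN hK κ hκ hg₂ hyp.1 hyp.2⟩

end PG
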